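/- Let G be a group, ρ̄ = χ̄₁ ⊕ ⋯ ⊕ χ̄_n a direct sum of characters χ̄_i: G → kˣ over a field k, and suppose there is a subgroup G' ≤ G of index d ≤ n and a d-dimensional-induction isomorphism ρ̄ ≅ Ind_{G'}^{G} τ̄ for some representation τ̄ of G'. If for all i ≠ j the characters χ̄_i|_{G'} are pairwise distinct (e.g. if each ratio χ̄_i/χ̄_j has order greater than n on G, hence nontrivial on any subgroup of index ≤ n), then d = 1 and G' = G, i.e. ρ̄ is primitive. -/
import Mathlib

lemma aux_singles {k : Type*} [Field k] {n : ℕ} (W : Submodule k (Fin n → k))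
    (hW : ∀ i j : Fin n, i ≠ j → ∃ a : Fin n → k, a i ≠ a j ∧
      ∀ v ∈ W, (fun m => a m * v m) ∈ W) :
    ∀ v ∈ W, ∀ i, Pi.single i (v i) ∈ W := by
  classical
  suffices H : ∀ N (v : Fin n → k), (Finset.univ.filter fun m => v m ≠ 0).card = N →
      v ∈ W → ∀ i, Pi.single i (v i) ∈ W from
    fun v hv i => H ((Finset.univ.filter fun m => v m ≠ 0).card) v rfl hv i
  intro N
  induction N using Nat.strong_induction_on with
  | _ N IH =>
    intro v hN hv i
    by_cases hvi : v i = 0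
    · simp [hvi]
    by_cases hsub : ∀ j, v j ≠ 0 → j = i
    · have : v = Pi.single i (v i) := by
        funext j
        by_cases hj : j = i
        · subst hj; simp
        · rw [Pi.single_eq_of_ne hj]
          by_contra hne
          exact hj (hsub j hne)
      rw [← this]; exact hv
    · push_neg at hsub
      obtain ⟨j, hvj, hji⟩ := hsub
      obtain ⟨a, haij, ha⟩ := hW i j (Ne.symm hji)
      set w : Fin n → k := fun m => (a m - a j) * v m with hw
      have hwW : w ∈ W := by
        have : w = (fun m => a m * v m) - (a j) • v := by
          funext m; simp [hw, sub_mul, smul_eq_mul]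
        rw [this]
        exact W.sub_mem (ha v hv) (W.smul_mem _ hv)
      have hwj : w j = 0 := by simp [hw]
      have haij' : a i - a j ≠ 0 := sub_ne_zero.mpr haij
      have hwi : w i = (a i - a j) * v i := rfl
      have hcard : (Finset.univ.filter fun m => w m ≠ 0).card < N := by
        rw [← hN]
        apply Finset.card_lt_card
        constructor
        · intro m hm
          simp only [Finset.mem_filter, Finset.mem_univ, true_and] at hm ⊢
          intro h0; exact hm (by simp [hw, h0])
        · intro hle
          have := hle (Finset.mem_filter.mpr ⟨Finset.mem_univ j, hvj⟩)
          simp only [Finset.mem_filter] at this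
          exact this.2 hwj
      have hres := IH _ hcard w rfl hwW i
      have : Pi.single i (v i) = (a i - a j)⁻¹ • (Pi.single i (w i) : Fin n → k) := by
        funext m
        rcases eq_or_ne m i with rfl | hm
        · simp [hwi, smul_eq_mul]
          field_simp
        · simp [Pi.single_eq_of_ne hm]
      rw [this]
      exact W.smul_mem _ hres

/-- Let `G` be a group, `ρ̄ = χ̄₁ ⊕ ⋯ ⊕ χ̄_n` a direct sum of characters
`χ̄ᵢ : G → kˣ` over a field `k` (realized as the diagonal representation on `kⁿ`), and
suppose there is a subgroup `G' ≤ G` of index `d ≤ n` and an isomorphism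
`ρ̄ ≅ Ind_{G'}^G τ̄` for some representation `τ̄` of `G'` — realized, as usual, by a system of
imprimitivity: a decomposition `kⁿ = ⊕_{c ∈ G/G'} V_c` into jointly independent spanning
subspaces with `ρ̄(g)·V_c = V_{g·c}`.  If the restricted characters `χ̄ᵢ|_{G'}` are pairwise
distinct, then `d = 1` and `G' = G`, i.e. `ρ̄` is primitive. -/
theorem stmt_19 (k : Type*) [Field k] (G : Type*) [Group G] (n : ℕ) (hn : 0 < n)
    (χ : Fin n → (G →* kˣ))
    (ρ : Representation k G (Fin n → k))
    (hρ : ∀ (g : G) (v : Fin n → k) (i : Fin n), ρ g v i = ((χ i g : k)) * v i)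
    (G' : Subgroup G) (d : ℕ) (hd : G'.index = d) (hdn : d ≤ n)
    (V : G ⧸ G' → Submodule k (Fin n → k))
    (hsup : ⨆ c, V c = ⊤)
    (hind : iSupIndep V)
    (hmap : ∀ (g : G) (c : G ⧸ G'), Submodule.map (ρ g) (V c) = V (g • c))
    (hdist : ∀ i j : Fin n, i ≠ j → (χ i).comp G'.subtype ≠ (χ j).comp G'.subtype) :
    d = 1 ∧ G' = ⊤ := by
  -- every V c is spanned by the coordinate vectors it contains
  have hcoord : ∀ c : G ⧸ G', ∀ v ∈ V c, ∀ i, Pi.single i (v i) ∈ V c := by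
    intro c
    refine aux_singles (V c) ?_
    intro i j hij
    induction c using QuotientGroup.induction_on with
    | H g₀ =>
      obtain ⟨h, hne⟩ : ∃ h : G', (χ i) (h : G) ≠ (χ j) (h : G) := by
        by_contra hc
        push_neg at hc
        exact hdist i j hij (MonoidHom.ext fun h => hc h)
      refine ⟨fun m => ((χ m (g₀ * h * g₀⁻¹) : kˣ) : k), ?_, ?_⟩
      · have hcomm : ∀ m : Fin n, χ m (g₀ * (h : G) * g₀⁻¹) = χ m (h : G) := by
          intro m
          rw [map_mul, map_mul, map_inv, mul_comm (χ m g₀), mul_assoc, mul_inv_cancel,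
            mul_one]
        show ((χ i (g₀ * (h : G) * g₀⁻¹) : kˣ) : k) ≠ ((χ j (g₀ * (h : G) * g₀⁻¹) : kˣ) : k)
        rw [hcomm i, hcomm j]
        exact fun e => hne (Units.ext e)
      · intro v hv
        have hstab : (g₀ * (h : G) * g₀⁻¹) • ((g₀ : G ⧸ G')) = (g₀ : G ⧸ G') := by
          have h1 : (g₀ * (h : G) * g₀⁻¹) • ((g₀ : G ⧸ G')) =
              ((g₀ * (h : G) * g₀⁻¹ * g₀ : G) : G ⧸ G') := rfl
          rw [h1]
          apply QuotientGroup.eq.mpr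
          simpa using h.2
        have hfun : (fun m => ((χ m (g₀ * h * g₀⁻¹) : kˣ) : k) * v m) = ρ (g₀ * h * g₀⁻¹) v := by
          funext m; rw [hρ]
        rw [hfun]
        have h2 := hmap (g₀ * h * g₀⁻¹) (g₀ : G ⧸ G')
        rw [hstab] at h2
        rw [← h2]
        exact ⟨v, hv, rfl⟩
  -- V is constant
  have hle : ∀ (g : G) (c : G ⧸ G'), V (g • c) ≤ V c := by
    intro g c
    rw [← hmap]
    rintro _ ⟨v, hv, rfl⟩
    have hv' : ρ g v = ∑ m : Fin n, ((χ m g : k)) • (Pi.single m (v m) : Fin n → k) := by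
      funext t
      rw [hρ]
      rw [Finset.sum_apply]
      simp [Pi.single_apply]
    rw [hv']
    exact Submodule.sum_mem _ fun m _ => Submodule.smul_mem _ _ (hcoord c v hv m)
  have heq : ∀ (g : G) (c : G ⧸ G'), V (g • c) = V c := by
    intro g c
    refine le_antisymm (hle g c) ?_
    have := hle g⁻¹ (g • c)
    rwa [inv_smul_smul] at this
  have hall : ∀ c : G ⧸ G', V c = V ((1 : G) : G ⧸ G') := by
    intro c
    induction c using QuotientGroup.induction_on with
    | H g₀ =>
      have h1 : (g₀ : G ⧸ G') = g₀ • ((1 : G) : G ⧸ G') := by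
        have : g₀ • ((1 : G) : G ⧸ G') = ((g₀ * 1 : G) : G ⧸ G') := rfl
        rw [this, mul_one]
      rw [h1, heq]
  have hVtop : V ((1 : G) : G ⧸ G') = ⊤ := by
    rw [← hsup]
    exact le_antisymm (le_iSup V _) (iSup_le fun c => le_of_eq (hall c))
  have hsing : Subsingleton (G ⧸ G') := by
    by_contra hns
    rw [not_subsingleton_iff_nontrivial] at hns
    obtain ⟨c, hc⟩ := exists_ne (((1 : G) : G ⧸ G'))
    have hdisj := hind c
    have h1le : V ((1 : G) : G ⧸ G') ≤ ⨆ j, ⨆ _ : j ≠ c, V j :=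
      le_iSup₂ (f := fun (j : G ⧸ G') (_ : j ≠ c) => V j) _ (Ne.symm hc)
    have hsupt : (⨆ j, ⨆ _ : j ≠ c, V j) = ⊤ := top_unique (hVtop ▸ h1le)
    have hcV : V c = ⊤ := (hall c).trans hVtop
    rw [hcV, hsupt, disjoint_top] at hdisj
    have hmem : (fun _ => 1 : Fin n → k) ∈ (⊥ : Submodule k (Fin n → k)) := by
      rw [← hdisj]; trivial
    rw [Submodule.mem_bot] at hmem
    have := congrFun hmem ⟨0, hn⟩
    exact one_ne_zero this
  have hcard : Nat.card (G ⧸ G') = 1 := by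
    haveI : Unique (G ⧸ G') := uniqueOfSubsingleton (((1 : G) : G ⧸ G'))
    exact Nat.card_unique
  have hd1 : d = 1 := by rw [← hd, Subgroup.index, hcard]
  exact ⟨hd1, Subgroup.index_eq_one.mp (hd ▸ hd1)⟩
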